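/- Let [x_k]_0^N be a Gaussian sequence of R^d-valued random vectors and c ∈ {0,N}. Then [x_k] is CM_c if and only if the R^{2d}-valued sequence y_k = (x_k, x_c), indexed by k ∈ [0,N]\{c} (i.e., k ∈ [0,N−1] if c = N and k ∈ [1,N] if c = 0), is Markov. -/

import Mathlib

open MeasureTheory ProbabilityTheory Matrix

noncomputable section

namespace CMSeq

variable {Ω : Type} [MeasurableSpace Ω]

/-- The covariance matrix `E[(X - E X)(Y - E Y)']` of two random vectors. -/
def cov {ι κ : Type} [Fintype ι] [Fintype κ] (μ : Measure Ω)
    (X : Ω → ι → ℝ) (Y : Ω → κ → ℝ) : Matrix ι κ ℝ :=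
  Matrix.of fun a b =>
    ∫ ω, (X ω a - ∫ ω', X ω' a ∂μ) * (Y ω b - ∫ ω', Y ω' b ∂μ) ∂μ

/-- The family `x 0, …, x (n-1)` of `ℝ^d`-valued random vectors is jointly Gaussian
(possibly degenerate): every linear combination of the entries has a Gaussian
distribution on `ℝ`. -/
def IsGaussianFam (μ : Measure Ω) (n d : ℕ) (x : ℕ → Ω → (Fin d → ℝ)) : Prop :=
  ∀ a : Fin n → Fin d → ℝ, ∃ m : ℝ, ∃ v : NNReal,
    μ.map (fun ω => ∑ k : Fin n, ∑ i : Fin d, a k i * x (k : ℕ) ω i) = gaussianReal m v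

/-- Jointly zero-mean Gaussian: every linear combination of the entries has a centered
Gaussian distribution on `ℝ`. -/
def IsZeroMeanGaussianFam (μ : Measure Ω) (n d : ℕ) (x : ℕ → Ω → (Fin d → ℝ)) : Prop :=
  ∀ a : Fin n → Fin d → ℝ, ∃ v : NNReal,
    μ.map (fun ω => ∑ k : Fin n, ∑ i : Fin d, a k i * x (k : ℕ) ω i) = gaussianReal 0 v

/-- `X` is a Moore-Penrose inverse of `A`. -/
def IsMoorePenrose {m n : Type} [Fintype m] [Fintype n]
    (A : Matrix m n ℝ) (X : Matrix n m ℝ) : Prop :=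
  A * X * A = A ∧ X * A * X = X ∧ (A * X)ᵀ = A * X ∧ (X * A)ᵀ = X * A

variable [StandardBorelSpace Ω]

/-- The sequence `(y k)` for `k ∈ [a, b]` is Markov: for `a ≤ j < k ≤ b`, `y k` is
conditionally independent of `(y i : a ≤ i < j)` given the σ-algebra generated by `y j`. -/
def IsMarkovOn {V : Type} [MeasurableSpace V] (μ : Measure Ω) [IsFiniteMeasure μ]
    (y : ℕ → Ω → V) (hy : ∀ k, Measurable (y k)) (a b : ℕ) : Prop :=
  ∀ j k : ℕ, a ≤ j → j < k → k ≤ b →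
    CondIndepFun (MeasurableSpace.comap (y j) inferInstance)
      (measurable_iff_comap_le.mp (hy j))
      (y k) (fun ω (i : Set.Ico a j) => y (i : ℕ) ω) μ

/-- `[x_k]` is `[k1,k2]`-CM_c : for `k1 ≤ j < k ≤ k2`, `x k` is conditionally independent
of `(x_{k1}, …, x_{j-1})` given the σ-algebra generated by `(x j, x c)`. -/
def IsCMOn {d : ℕ} (μ : Measure Ω) [IsFiniteMeasure μ] (x : ℕ → Ω → (Fin d → ℝ))
    (hx : ∀ k, Measurable (x k)) (k1 k2 c : ℕ) : Prop :=
  ∀ j k : ℕ, k1 ≤ j → j < k → k ≤ k2 →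
    CondIndepFun (MeasurableSpace.comap (fun ω => (x j ω, x c ω)) inferInstance)
      (measurable_iff_comap_le.mp ((hx j).prodMk (hx c)))
      (x k) (fun ω (i : Set.Ico k1 j) => x (i : ℕ) ω) μ

/-- `[x_k]_0^N` is reciprocal: for `0 ≤ j < k < l ≤ N`, `x k` is conditionally independent
of `(x_0, …, x_{j-1}, x_{l+1}, …, x_N)` given the σ-algebra generated by `(x j, x l)`. -/
def IsReciprocal {d : ℕ} (μ : Measure Ω) [IsFiniteMeasure μ] (N : ℕ)
    (x : ℕ → Ω → (Fin d → ℝ)) (hx : ∀ k, Measurable (x k)) : Prop :=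
  ∀ j k l : ℕ, j < k → k < l → l ≤ N →
    CondIndepFun (MeasurableSpace.comap (fun ω => (x j ω, x l ω)) inferInstance)
      (measurable_iff_comap_le.mp ((hx j).prodMk (hx l)))
      (x k) (fun ω (i : {i : ℕ // i < j ∨ (l < i ∧ i ≤ N)}) => x (i : ℕ) ω) μ

/-- `[e_k]_0^{n-1}` is a zero-mean white Gaussian sequence: jointly Gaussian, zero-mean,
and mutually independent. -/
def IsWhiteGaussian (μ : Measure Ω) (n d : ℕ) (e : ℕ → Ω → (Fin d → ℝ)) : Prop :=
  IsZeroMeanGaussianFam μ n d e ∧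
    iIndepFun (fun k : Fin n => e (k : ℕ)) μ

/-- `[x_k]_0^N` obeys the `CM_L` dynamic model with parameters `F k = G_{k,k-1}`
(for `k ∈ [1,N-1]`), `GN k = G_{k,N}` (for `k ∈ [0,N-1]`) and zero-mean white Gaussian
noise `[e_k]_0^N`:  `x_N = e_N`, `x_0 = G_{0,N} x_N + e_0` and
`x_k = G_{k,k-1} x_{k-1} + G_{k,N} x_N + e_k` for `k ∈ [1,N-1]`, all almost surely. -/
def ObeysCMLModel (μ : Measure Ω) (N d : ℕ) (x : ℕ → Ω → (Fin d → ℝ))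
    (F GN : ℕ → Matrix (Fin d) (Fin d) ℝ) (e : ℕ → Ω → (Fin d → ℝ)) : Prop :=
  (∀ k, Measurable (e k)) ∧ IsWhiteGaussian μ (N + 1) d e ∧
    (∀ᵐ ω ∂μ, x N ω = e N ω) ∧
    (∀ᵐ ω ∂μ, x 0 ω = (GN 0).mulVec (x N ω) + e 0 ω) ∧
    (∀ k : ℕ, 1 ≤ k → k ≤ N - 1 →
      ∀ᵐ ω ∂μ, x k ω = (F k).mulVec (x (k - 1) ω) + (GN k).mulVec (x N ω) + e k ω)

/-- `[x_k]_0^N` obeys the `CM_F` dynamic model with parameters `F k = G_{k,k-1}` and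
`G0 k = G_{k,0}` (for `k ∈ [1,N]`) and zero-mean white Gaussian noise `[e_k]_0^N`:
`x_0 = e_0` and `x_k = G_{k,k-1} x_{k-1} + G_{k,0} x_0 + e_k` for `k ∈ [1,N]`. -/
def ObeysCMFModel (μ : Measure Ω) (N d : ℕ) (x : ℕ → Ω → (Fin d → ℝ))
    (F G0 : ℕ → Matrix (Fin d) (Fin d) ℝ) (e : ℕ → Ω → (Fin d → ℝ)) : Prop :=
  (∀ k, Measurable (e k)) ∧ IsWhiteGaussian μ (N + 1) d e ∧
    (∀ᵐ ω ∂μ, x 0 ω = e 0 ω) ∧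
    (∀ k : ℕ, 1 ≤ k → k ≤ N →
      ∀ᵐ ω ∂μ, x k ω = (F k).mulVec (x (k - 1) ω) + (G0 k).mulVec (x 0 ω) + e k ω)

/-- The `(N+1)d × (N+1)d` block matrix `𝓖` of the `CM_L` model: identity diagonal blocks,
block `-(F k)` in block position `(k, k-1)` for `k ∈ [1, N-1]`, block `-(GN k)` in block
position `(k, N)` for `k ∈ [0, N-1]`, and zero blocks elsewhere. -/
def scriptG (N d : ℕ) (F GN : ℕ → Matrix (Fin d) (Fin d) ℝ) :
    Matrix (Fin (N + 1) × Fin d) (Fin (N + 1) × Fin d) ℝ :=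
  Matrix.of fun p q =>
    (if p.1 = q.1 then (1 : Matrix (Fin d) (Fin d) ℝ) p.2 q.2 else 0)
    - (if (p.1 : ℕ) = (q.1 : ℕ) + 1 ∧ 1 ≤ (p.1 : ℕ) ∧ (p.1 : ℕ) ≤ N - 1
        then (F (p.1 : ℕ)) p.2 q.2 else 0)
    - (if (q.1 : ℕ) = N ∧ (p.1 : ℕ) ≤ N - 1 then (GN (p.1 : ℕ)) p.2 q.2 else 0)

/-- The `(N+1)d × (N+1)d` block-diagonal matrix `G = diag(G_0, …, G_N)` with
`G_k = Cov(e_k)`. -/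
def blockDiagCov (μ : Measure Ω) (N d : ℕ) (e : ℕ → Ω → (Fin d → ℝ)) :
    Matrix (Fin (N + 1) × Fin d) (Fin (N + 1) × Fin d) ℝ :=
  Matrix.of fun p q =>
    if p.1 = q.1 then cov μ (e (p.1 : ℕ)) (e (q.1 : ℕ)) p.2 q.2 else 0

/-- The covariance matrix `P = 𝓖⁻¹ G (𝓖')⁻¹` determined by the parameters of a `CM_L`
model. -/
def bigP (μ : Measure Ω) (N d : ℕ) (F GN : ℕ → Matrix (Fin d) (Fin d) ℝ)
    (e : ℕ → Ω → (Fin d → ℝ)) :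
    Matrix (Fin (N + 1) × Fin d) (Fin (N + 1) × Fin d) ℝ :=
  (scriptG N d F GN)⁻¹ * blockDiagCov μ N d e * ((scriptG N d F GN)ᵀ)⁻¹

/-- The `(i,j)` `d × d` block of an `(N+1)d × (N+1)d` matrix. -/
def blk {N d : ℕ} (P : Matrix (Fin (N + 1) × Fin d) (Fin (N + 1) × Fin d) ℝ)
    (i j : Fin (N + 1)) : Matrix (Fin d) (Fin d) ℝ :=
  Matrix.of fun a b => P (i, a) (j, b)

/-- The reciprocal/CM covariance identity
`C_{k,i} = [C_{k,j} C_{k,l}] ([[C_j, C_{j,l}],[C_{l,j}, C_l]])⁺ [C_{j,i}; C_{l,i}]`,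
phrased for every Moore-Penrose inverse of the middle matrix. -/
def CovCMIdentity {d : ℕ} (C : ℕ → ℕ → Matrix (Fin d) (Fin d) ℝ) (i j k l : ℕ) : Prop :=
  ∀ M : Matrix (Fin d ⊕ Fin d) (Fin d ⊕ Fin d) ℝ,
    IsMoorePenrose (Matrix.fromBlocks (C j j) (C j l) (C l j) (C l l)) M →
      C k i = Matrix.fromCols (C k j) (C k l) * M * Matrix.fromRows (C j i) (C l i)
/-- The CM/reciprocal identity for the `d × d` blocks of a big block matrix `P`, phrased
for every Moore-Penrose inverse of the middle matrix. -/
def BlkCMIdentity {N d : ℕ} (P : Matrix (Fin (N + 1) × Fin d) (Fin (N + 1) × Fin d) ℝ)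
    (i j k l : Fin (N + 1)) : Prop :=
  ∀ M : Matrix (Fin d ⊕ Fin d) (Fin d ⊕ Fin d) ℝ,
    IsMoorePenrose (Matrix.fromBlocks (blk P j j) (blk P j l) (blk P l j) (blk P l l)) M →
      blk P k i =
        Matrix.fromCols (blk P k j) (blk P k l) * M *
          Matrix.fromRows (blk P j i) (blk P l i)

end CMSeq

namespace CMHelp

private lemma msetInter {Ω : Type} {m : MeasurableSpace Ω} {s t : Set Ω}
    (hs : MeasurableSet[m] s) (ht : MeasurableSet[m] t) : MeasurableSet[m] (s ∩ t) :=
  hs.inter ht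

private lemma msetUniv {Ω : Type} {m : MeasurableSpace Ω} : MeasurableSet[m] (Set.univ : Set Ω) :=
  MeasurableSet.univ

private lemma indicator_integrable {Ω : Type} [mΩ : MeasurableSpace Ω] (μ : Measure Ω)
    [IsFiniteMeasure μ] {t : Set Ω} (ht : MeasurableSet[mΩ] t) :
    Integrable (t.indicator fun _ => (1:ℝ)) μ :=
  (integrable_const 1).indicator ht

variable {Ω : Type} {mΩ : MeasurableSpace Ω} [StandardBorelSpace Ω]
  {μ : Measure Ω} [IsFiniteMeasure μ]

lemma aux_condexp_inter {m' : MeasurableSpace Ω} (hm' : m' ≤ mΩ) {B t : Set Ω}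
    (hB : MeasurableSet[m'] B) (ht : MeasurableSet[mΩ] t) :
    (μ⟦B ∩ t | m'⟧) =ᵐ[μ] B.indicator (μ⟦t | m'⟧) := by
  have h1 : Set.indicator (B ∩ t) (fun _ : Ω => (1:ℝ))
      = B.indicator (t.indicator fun _ => 1) := (Set.indicator_indicator _ _ _).symm
  rw [h1]
  exact condExp_indicator (indicator_integrable (mΩ := mΩ) μ ht) hB

lemma aux_condexp_self {m' : MeasurableSpace Ω} (hm' : m' ≤ mΩ) {t : Set Ω}
    (ht : MeasurableSet[m'] t) :
    (μ⟦t | m'⟧) =ᵐ[μ] t.indicator fun _ => (1:ℝ) := by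
  have h0 : (μ⟦t ∩ Set.univ | m'⟧) =ᵐ[μ] t.indicator (μ⟦(Set.univ : Set Ω) | m'⟧) :=
    aux_condexp_inter hm' ht msetUniv
  rw [Set.inter_univ] at h0
  have h2 : (μ⟦(Set.univ : Set Ω) | m'⟧) = fun _ => (1:ℝ) := by
    rw [Set.indicator_univ]; exact condExp_const hm' 1
  rw [h2] at h0
  exact h0

lemma aux_condIndep_of_le {m' m₁ m₂ : MeasurableSpace Ω} (hm' : m' ≤ mΩ)
    (h₁ : m₁ ≤ m') (hm₂ : m₂ ≤ mΩ) :
    CondIndep m' m₁ m₂ hm' μ := by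
  rw [condIndep_iff m' m₁ m₂ hm' (h₁.trans hm') hm₂ μ]
  intro t1 t2 ht1 ht2
  have h1 : (μ⟦t1 ∩ t2 | m'⟧) =ᵐ[μ] t1.indicator (μ⟦t2 | m'⟧) :=
    aux_condexp_inter hm' (h₁ _ ht1) (hm₂ _ ht2)
  have h2 : (μ⟦t1 | m'⟧) =ᵐ[μ] t1.indicator fun _ => (1:ℝ) :=
    aux_condexp_self hm' (h₁ _ ht1)
  filter_upwards [h1, h2] with ω hω h2ω
  rw [hω, Pi.mul_apply, h2ω]
  by_cases h : ω ∈ t1 <;> simp [Set.indicator_apply, h]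

lemma aux_condIndep_sup {m' m₁ m₂ ms : MeasurableSpace Ω} (hm' : m' ≤ mΩ)
    (hm₁ : m₁ ≤ mΩ) (hm₂ : m₂ ≤ mΩ) (hs : ms ≤ m')
    (h : CondIndep m' m₁ m₂ hm' μ) :
    CondIndep m' (m₁ ⊔ ms) (m₂ ⊔ ms) hm' μ := by
  have hsΩ : ms ≤ mΩ := hs.trans hm'
  have hgen : ∀ m : MeasurableSpace Ω, m ⊔ ms = MeasurableSpace.generateFrom
      {u | ∃ A B, MeasurableSet[m] A ∧ MeasurableSet[ms] B ∧ u = A ∩ B} := by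
    intro m
    refine le_antisymm (sup_le ?_ ?_) ?_
    · intro t ht
      exact MeasurableSpace.measurableSet_generateFrom
        ⟨t, Set.univ, ht, msetUniv, (Set.inter_univ t).symm⟩
    · intro t ht
      exact MeasurableSpace.measurableSet_generateFrom
        ⟨Set.univ, t, msetUniv, ht, (Set.univ_inter t).symm⟩
    · rw [MeasurableSpace.generateFrom_le_iff]
      rintro u ⟨A, B, hA, hB, rfl⟩
      exact msetInter ((le_sup_left : m ≤ m ⊔ ms) _ hA)
        ((le_sup_right : ms ≤ m ⊔ ms) _ hB)
  have hpi : ∀ m : MeasurableSpace Ω, IsPiSystem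
      {u | ∃ A B, MeasurableSet[m] A ∧ MeasurableSet[ms] B ∧ u = A ∩ B} := by
    rintro m _ ⟨A1, B1, hA1, hB1, rfl⟩ _ ⟨A2, B2, hA2, hB2, rfl⟩ -
    exact ⟨A1 ∩ A2, B1 ∩ B2, msetInter hA1 hA2, msetInter hB1 hB2, by
      ext ω; simp only [Set.mem_inter_iff]; tauto⟩
  refine CondIndepSets.condIndep (sup_le hm₁ hsΩ) (sup_le hm₂ hsΩ)
    (hpi m₁) (hpi m₂) (hgen m₁) (hgen m₂) ?_
  have hmeas : ∀ (m : MeasurableSpace Ω), m ≤ mΩ → ∀ u ∈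
      {u | ∃ A B, MeasurableSet[m] A ∧ MeasurableSet[ms] B ∧ u = A ∩ B},
      MeasurableSet[mΩ] u := by
    rintro m hm _ ⟨A, B, hA, hB, rfl⟩
    exact msetInter (hm _ hA) (hsΩ _ hB)
  rw [condIndepSets_iff _ hm' _ _ (hmeas m₁ hm₁) (hmeas m₂ hm₂)]
  rintro _ _ ⟨A1, B1, hA1, hB1, rfl⟩ ⟨A2, B2, hA2, hB2, rfl⟩
  have hprod : (μ⟦A1 ∩ A2 | m'⟧) =ᵐ[μ] (μ⟦A1 | m'⟧) * (μ⟦A2 | m'⟧) :=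
    (condIndep_iff m' m₁ m₂ hm' hm₁ hm₂ μ).mp h A1 A2 hA1 hA2
  have e0 : (A1 ∩ B1) ∩ (A2 ∩ B2) = (B1 ∩ B2) ∩ (A1 ∩ A2) := by
    ext ω; simp only [Set.mem_inter_iff]; tauto
  have h0 : (μ⟦(A1 ∩ B1) ∩ (A2 ∩ B2) | m'⟧)
      =ᵐ[μ] (B1 ∩ B2).indicator (μ⟦A1 ∩ A2 | m'⟧) := by
    rw [e0]
    exact aux_condexp_inter hm' (msetInter (hs _ hB1) (hs _ hB2))
      (msetInter (hm₁ _ hA1) (hm₂ _ hA2))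
  have h1 : (μ⟦A1 ∩ B1 | m'⟧) =ᵐ[μ] B1.indicator (μ⟦A1 | m'⟧) := by
    rw [Set.inter_comm A1 B1]; exact aux_condexp_inter hm' (hs _ hB1) (hm₁ _ hA1)
  have h2 : (μ⟦A2 ∩ B2 | m'⟧) =ᵐ[μ] B2.indicator (μ⟦A2 | m'⟧) := by
    rw [Set.inter_comm A2 B2]; exact aux_condexp_inter hm' (hs _ hB2) (hm₂ _ hA2)
  filter_upwards [h0, h1, h2, hprod] with ω hw0 hw1 hw2 hwprod
  rw [hw0, Pi.mul_apply, hw1, hw2]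
  by_cases hb1 : ω ∈ B1 <;> by_cases hb2 : ω ∈ B2 <;>
    simp [Set.indicator_apply, hb1, hb2, hwprod]

lemma comap_pi_eq {Ω' ι α : Type*} [m : MeasurableSpace α] (f : ι → Ω' → α) :
    MeasurableSpace.comap (fun (ω : Ω') (i : ι) => f i ω) MeasurableSpace.pi
      = ⨆ i, MeasurableSpace.comap (f i) m := by
  rw [show (MeasurableSpace.pi : MeasurableSpace (ι → α))
      = ⨆ i, m.comap (fun g => g i) from rfl,
    MeasurableSpace.comap_iSup]
  exact iSup_congr fun i => MeasurableSpace.comap_comp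

lemma comap_prodMk_eq {Ω' α β : Type*} [mα : MeasurableSpace α] [mβ : MeasurableSpace β]
    (f : Ω' → α) (g : Ω' → β) :
    MeasurableSpace.comap (fun ω => (f ω, g ω)) inferInstance
      = MeasurableSpace.comap f mα ⊔ MeasurableSpace.comap g mβ := by
  rw [show (inferInstance : MeasurableSpace (α × β))
      = mα.comap Prod.fst ⊔ mβ.comap Prod.snd from rfl,
    MeasurableSpace.comap_sup, MeasurableSpace.comap_comp, MeasurableSpace.comap_comp]
  rfl


lemma le_comap_pi {Ω' ι α : Type*} [m : MeasurableSpace α]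
    (f : ι → Ω' → α) (i : ι) :
    MeasurableSpace.comap (f i) m
      ≤ MeasurableSpace.comap (fun (ω : Ω') (j : ι) => f j ω) MeasurableSpace.pi :=
  (le_iSup (fun i => MeasurableSpace.comap (f i) m) i).trans_eq (comap_pi_eq f).symm

lemma comap_pi_le {Ω' ι α : Type*} [m : MeasurableSpace α]
    (f : ι → Ω' → α) {M : MeasurableSpace Ω'}
    (h : ∀ i, MeasurableSpace.comap (f i) m ≤ M) :
    MeasurableSpace.comap (fun (ω : Ω') (j : ι) => f j ω) MeasurableSpace.pi ≤ M :=
  (comap_pi_eq f).trans_le (iSup_le h)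

lemma transfer {Ω : Type} {mΩ : MeasurableSpace Ω} [StandardBorelSpace Ω]
    {μ : Measure Ω} [IsFiniteMeasure μ]
    {m' A₁ A₂ B₁ B₂ : MeasurableSpace Ω} {hm' : m' ≤ mΩ}
    (h : CondIndep m' A₁ A₂ hm' μ) (h1 : B₁ ≤ A₁) (h2 : B₂ ≤ A₂) :
    CondIndep m' B₁ B₂ hm' μ :=
  condIndep_of_condIndep_of_le_right (condIndep_of_condIndep_of_le_left h h1) h2

end CMHelp


set_option maxHeartbeats 1000000 in
open CMSeq in
theorem statement7 {Ω : Type} [MeasurableSpace Ω] [StandardBorelSpace Ω]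
    (μ : MeasureTheory.Measure Ω) [MeasureTheory.IsProbabilityMeasure μ]
    (N d c : ℕ) (hN : 2 ≤ N) (hd : 1 ≤ d) (hc : c = 0 ∨ c = N)
    (x : ℕ → Ω → (Fin d → ℝ)) (hx : ∀ k, Measurable (x k))
    (hGauss : IsGaussianFam μ (N + 1) d x) :
    IsCMOn μ x hx 0 N c ↔
      IsMarkovOn μ (fun k ω => (x k ω, x c ω)) (fun k => (hx k).prodMk (hx c))
        (if c = 0 then 1 else 0) (if c = 0 then N else N - 1) := by

  classical
  have hc' : ∀ j : ℕ, MeasurableSpace.comap (x c) inferInstance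
      ≤ MeasurableSpace.comap (fun ω => (x j ω, x c ω)) inferInstance := fun j =>
    le_sup_right.trans_eq (CMHelp.comap_prodMk_eq (x j) (x c)).symm
  rcases hc with rfl | rfl
  · -- c = 0
    rw [if_pos rfl, if_pos rfl]
    simp only [IsCMOn, IsMarkovOn]
    constructor
    · intro h j k hj1 hjk hkN
      rw [condIndepFun_iff_condIndep]
      have h0 := (condIndepFun_iff_condIndep _ _ _ _ _).mp (h j k (Nat.zero_le j) hjk hkN)
      have big := CMHelp.aux_condIndep_sup (measurable_iff_comap_le.mp ((hx j).prodMk (hx 0)))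
        (measurable_iff_comap_le.mp (hx k))
        (measurable_iff_comap_le.mp (measurable_pi_lambda _ fun i : ↥(Set.Ico 0 j) => hx (i : ℕ)))
        (hc' j) h0
      refine CMHelp.transfer big ?_ ?_
      · exact le_of_eq (CMHelp.comap_prodMk_eq (x k) (x 0))
      · refine CMHelp.comap_pi_le _ fun i => ?_
        refine le_of_eq_of_le (CMHelp.comap_prodMk_eq (x (i : ℕ)) (x 0)) ?_
        refine sup_le_sup ?_ le_rfl
        exact CMHelp.le_comap_pi (fun (i : ↥(Set.Ico 0 j)) ω => x (i : ℕ) ω)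
          ⟨(i : ℕ), Set.mem_Ico.mpr ⟨Nat.zero_le _, (Set.mem_Ico.mp i.2).2⟩⟩
    · intro h j k _ hjk hkN
      rw [condIndepFun_iff_condIndep]
      by_cases hj2 : 2 ≤ j
      · have h0 := (condIndepFun_iff_condIndep _ _ _ _ _).mp
          (h j k (by omega) hjk hkN)
        refine CMHelp.transfer h0 ?_ ?_
        · exact le_sup_left.trans_eq (CMHelp.comap_prodMk_eq (x k) (x 0)).symm
        · refine CMHelp.comap_pi_le _ fun i => ?_
          by_cases hi : (i : ℕ) = 0
          · have h1 : MeasurableSpace.comap (x (i : ℕ)) inferInstance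
                ≤ MeasurableSpace.comap (fun ω => (x 1 ω, x 0 ω)) inferInstance := by
              rw [hi, CMHelp.comap_prodMk_eq]; exact le_sup_right
            exact h1.trans (CMHelp.le_comap_pi
              (fun (i : ↥(Set.Ico 1 j)) ω => (x (i : ℕ) ω, x 0 ω))
              ⟨1, Set.mem_Ico.mpr ⟨le_rfl, by omega⟩⟩)
          · have hmem : (i : ℕ) ∈ Set.Ico 1 j := by
              have := Set.mem_Ico.mp i.2; exact Set.mem_Ico.mpr ⟨by omega, this.2⟩
            have h1 : MeasurableSpace.comap (x (i : ℕ)) inferInstance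
                ≤ MeasurableSpace.comap (fun ω => (x (i : ℕ) ω, x 0 ω)) inferInstance :=
              le_sup_left.trans_eq (CMHelp.comap_prodMk_eq (x (i : ℕ)) (x 0)).symm
            exact h1.trans (CMHelp.le_comap_pi
              (fun (i : ↥(Set.Ico 1 j)) ω => (x (i : ℕ) ω, x 0 ω)) ⟨(i : ℕ), hmem⟩)
      · refine ProbabilityTheory.CondIndep.symm
          (CMHelp.aux_condIndep_of_le _ ?_ (measurable_iff_comap_le.mp (hx k)))
        refine CMHelp.comap_pi_le _ fun i => ?_
        have hi0 : (i : ℕ) = 0 := by have := Set.mem_Ico.mp i.2; omega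
        rw [hi0]
        exact hc' j
  · -- c = N
    rw [if_neg (by omega), if_neg (by omega)]
    simp only [IsCMOn, IsMarkovOn]
    constructor
    · intro h j k hj0 hjk hkN1
      rw [condIndepFun_iff_condIndep]
      have h0 := (condIndepFun_iff_condIndep _ _ _ _ _).mp (h j k hj0 hjk (by omega))
      have big := CMHelp.aux_condIndep_sup (measurable_iff_comap_le.mp ((hx j).prodMk (hx c)))
        (measurable_iff_comap_le.mp (hx k))
        (measurable_iff_comap_le.mp (measurable_pi_lambda _ fun i : ↥(Set.Ico 0 j) => hx (i : ℕ)))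
        (hc' j) h0
      refine CMHelp.transfer big ?_ ?_
      · exact le_of_eq (CMHelp.comap_prodMk_eq (x k) (x c))
      · refine CMHelp.comap_pi_le _ fun i => ?_
        refine le_of_eq_of_le (CMHelp.comap_prodMk_eq (x (i : ℕ)) (x c)) ?_
        refine sup_le_sup ?_ le_rfl
        exact CMHelp.le_comap_pi (fun (i : ↥(Set.Ico 0 j)) ω => x (i : ℕ) ω) i
    · intro h j k _ hjk hkN
      rw [condIndepFun_iff_condIndep]
      by_cases hk : k = c
      · subst hk
        exact CMHelp.aux_condIndep_of_le _ (hc' j)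
          (measurable_iff_comap_le.mp (measurable_pi_lambda _ fun i : ↥(Set.Ico 0 j) => hx (i : ℕ)))
      · have h0 := (condIndepFun_iff_condIndep _ _ _ _ _).mp
          (h j k (Nat.zero_le _) hjk (by omega))
        refine CMHelp.transfer h0 ?_ ?_
        · exact le_sup_left.trans_eq (CMHelp.comap_prodMk_eq (x k) (x c)).symm
        · refine CMHelp.comap_pi_le _ fun i => ?_
          exact (le_sup_left.trans_eq (CMHelp.comap_prodMk_eq (x (i : ℕ)) (x c)).symm).trans
            (CMHelp.le_comap_pi (fun (i : ↥(Set.Ico 0 j)) ω => (x (i : ℕ) ω, x c ω)) i)
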